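/- Let π : X → Y be a factor map of minimal systems with Y doubly minimal. If (y₀, x₁) ∈ Y×X satisfies π(x₁) = T^n y₀ for some n ∈ ℤ, then the orbit closure of (y₀, x₁) under the product homeomorphism equals {(π(x), T^n x) : x ∈ X}, hence it is the graph of the factor map π∘T^{-n} and is isomorphic to X. -/

import Mathlib

/-- The group of self-homeomorphisms under composition, so that `T ^ n` (`n : ℤ`)
denotes the `n`-th iterate of `T`. -/
instance Homeomorph.instGroupSelf {X : Type*} [TopologicalSpace X] : Group (X ≃ₜ X) where
  mul f g := g.trans f
  one := Homeomorph.refl X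
  inv := Homeomorph.symm
  mul_assoc _ _ _ := Homeomorph.ext fun _ => rfl
  one_mul _ := Homeomorph.ext fun _ => rfl
  mul_one _ := Homeomorph.ext fun _ => rfl
  inv_mul_cancel f := Homeomorph.ext fun x => f.symm_apply_apply x

/-- The orbit closure of a point under a homeomorphism. -/
def orbitCl {X : Type*} [TopologicalSpace X] (T : X ≃ₜ X) (p : X) : Set X :=
  closure {q | ∃ n : ℤ, (T ^ n) p = q}

/-- A (minimal) dynamical system: every orbit closure is everything. -/
def IsMinimalSys {X : Type*} [TopologicalSpace X] (T : X ≃ₜ X) : Prop :=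
  ∀ x : X, orbitCl T x = Set.univ

/-- Totally minimal: every nonzero power is minimal. -/
def IsTotallyMinimal {X : Type*} [TopologicalSpace X] (T : X ≃ₜ X) : Prop :=
  ∀ n : ℤ, n ≠ 0 → IsMinimalSys (T ^ n)

/-- The graph Γ_n = {(T^n x, x) : x ∈ X}. -/
def graphPow {X : Type*} [TopologicalSpace X] (T : X ≃ₜ X) (n : ℤ) : Set (X × X) :=
  {p | ∃ x : X, p = ((T ^ n) x, x)}

/-- POD: totally minimal and for distinct u, v some graph Γ_n (n ≠ 0) lies in the
orbit closure of (u, v) under T × T. -/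
def IsPOD {X : Type*} [TopologicalSpace X] (T : X ≃ₜ X) : Prop :=
  IsMinimalSys T ∧ IsTotallyMinimal T ∧
    ∀ u v : X, u ≠ v → ∃ n : ℤ, n ≠ 0 ∧
      graphPow T n ⊆ orbitCl (T.prodCongr T) (u, v)

/-- Doubly minimal: minimal, and every orbit closure of T × T is either everything
or a graph Γ_m. -/
def IsDoublyMinimal {X : Type*} [TopologicalSpace X] (T : X ≃ₜ X) : Prop :=
  IsMinimalSys T ∧
    ∀ p : X × X, orbitCl (T.prodCongr T) p = Set.univ ∨
      ∃ m : ℤ, orbitCl (T.prodCongr T) p = graphPow T m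

/-- A factor map: continuous equivariant surjection. -/
def IsFactorMap {X Y : Type*} [TopologicalSpace X] [TopologicalSpace Y]
    (T : X ≃ₜ X) (S : Y ≃ₜ Y) (π : X → Y) : Prop :=
  Continuous π ∧ Function.Surjective π ∧ ∀ x, π (T x) = S (π x)

/-- Disjointness: the only closed invariant subset of the product projecting
onto both coordinates is the whole product. -/
def SysDisjoint {X Y : Type*} [TopologicalSpace X] [TopologicalSpace Y]
    (T : X ≃ₜ X) (S : Y ≃ₜ Y) : Prop :=
  ∀ M : Set (X × Y), IsClosed M → (T.prodCongr S) '' M = M →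
    Prod.fst '' M = Set.univ → Prod.snd '' M = Set.univ → M = Set.univ

/-- A recurrent point: in the closure of its forward orbit with positive times. -/
def IsRecurrentPt {X : Type*} [TopologicalSpace X] (T : X ≃ₜ X) (x : X) : Prop :=
  x ∈ closure {q | ∃ n : ℕ, 1 ≤ n ∧ (T ^ n) x = q}

/-- A proximal pair: the orbits come arbitrarily close together. -/
def IsProximal {X : Type*} [PseudoMetricSpace X] (T : X ≃ₜ X) (x x' : X) : Prop :=
  ∀ ε > 0, ∃ n : ℤ, dist ((T ^ n) x) ((T ^ n) x') < ε

/-- A distal point: proximal only to itself. -/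
def IsDistalPt {X : Type*} [PseudoMetricSpace X] (T : X ≃ₜ X) (x : X) : Prop :=
  ∀ x', IsProximal T x x' → x' = x

/-- A minimal subset: nonempty, closed, invariant, with all orbits dense in it. -/
def IsMinimalSubset {X : Type*} [TopologicalSpace X] (T : X ≃ₜ X) (M : Set X) : Prop :=
  M.Nonempty ∧ IsClosed M ∧ (T : X ≃ₜ X) '' M = M ∧
    ∀ p ∈ M, M ⊆ closure {q | ∃ n : ℤ, (T ^ n) p = q}

/-- Topological transitivity. -/
def IsTopTransitive {X : Type*} [TopologicalSpace X] (T : X ≃ₜ X) : Prop :=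
  ∀ U V : Set X, IsOpen U → IsOpen V → U.Nonempty → V.Nonempty →
    ∃ n : ℤ, ((T ^ n) '' U ∩ V).Nonempty

/-- Weak mixing: the product system is topologically transitive. -/
def IsWeaklyMixing {X : Type*} [TopologicalSpace X] (T : X ≃ₜ X) : Prop :=
  IsTopTransitive (T.prodCongr T)

lemma homeo_mul_apply {X : Type*} [TopologicalSpace X] (f g : X ≃ₜ X) (x : X) :
    (f * g) x = f (g x) := rfl

lemma homeo_inv_apply {X : Type*} [TopologicalSpace X] (f : X ≃ₜ X) (x : X) :
    (f⁻¹) x = f.symm x := rfl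

lemma homeo_zpow_add_apply {X : Type*} [TopologicalSpace X] (f : X ≃ₜ X) (a b : ℤ) (x : X) :
    (f ^ (a + b)) x = (f ^ a) ((f ^ b) x) := by
  rw [zpow_add, homeo_mul_apply]

lemma prodCongr_zpow_apply {X Y : Type*} [TopologicalSpace X] [TopologicalSpace Y]
    (S : Y ≃ₜ Y) (T : X ≃ₜ X) (m : ℤ) : ∀ p : Y × X,
    ((S.prodCongr T) ^ m) p = ((S ^ m) p.1, (T ^ m) p.2) := by
  induction m using Int.induction_on with
  | zero => intro p; rfl
  | succ k ih =>
      intro p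
      rw [zpow_add_one, homeo_mul_apply, zpow_add_one, zpow_add_one, homeo_mul_apply,
        homeo_mul_apply]
      exact ih ((S.prodCongr T) p)
  | pred k ih =>
      intro p
      rw [zpow_sub_one, homeo_mul_apply, zpow_sub_one, zpow_sub_one, homeo_mul_apply,
        homeo_mul_apply]
      exact ih ((S.prodCongr T)⁻¹ p)

lemma factor_zpow {X Y : Type*} [TopologicalSpace X] [TopologicalSpace Y]
    (T : X ≃ₜ X) (S : Y ≃ₜ Y) (π : X → Y) (hπ : IsFactorMap T S π) (m : ℤ) : ∀ x : X,
    π ((T ^ m) x) = (S ^ m) (π x) := by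
  have hsym : ∀ z : X, π (T.symm z) = S.symm (π z) := by
    intro z
    have := hπ.2.2 (T.symm z)
    rw [T.apply_symm_apply] at this
    rw [this, S.symm_apply_apply]
  induction m using Int.induction_on with
  | zero => intro x; rfl
  | succ k ih =>
      intro x
      rw [zpow_add_one, homeo_mul_apply, zpow_add_one, homeo_mul_apply, ih, hπ.2.2]
  | pred k ih =>
      intro x
      rw [zpow_sub_one, homeo_mul_apply, zpow_sub_one, homeo_mul_apply, homeo_inv_apply,
        homeo_inv_apply, ih, hsym]

theorem orbitCl_of_onOrbit {X Y : Type*} [MetricSpace X] [CompactSpace X] [MetricSpace Y] [CompactSpace Y]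
    (T : X ≃ₜ X) (S : Y ≃ₜ Y) (π : X → Y) (hπ : IsFactorMap T S π)
    (hT : IsMinimalSys T) (hS : IsDoublyMinimal S)
    (y₀ : Y) (x₁ : X) (n : ℤ) (h : π x₁ = (S ^ n) y₀) :
    orbitCl (S.prodCongr T) (y₀, x₁) = {p : Y × X | ∃ x : X, p = (π x, (T ^ n) x)} := by
  set φ : X → Y × X := fun x => (π x, (T ^ n) x) with hφ
  have hφc : Continuous φ := hπ.1.prodMk (T ^ n).continuous
  set x₀ : X := (T ^ (-n)) x₁ with hx₀
  have hx1 : (T ^ n) x₀ = x₁ := by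
    rw [hx₀, ← homeo_zpow_add_apply, add_neg_cancel, zpow_zero]; rfl
  have hy : π x₀ = y₀ := by
    rw [hx₀, factor_zpow T S π hπ, h, ← homeo_zpow_add_apply, neg_add_cancel, zpow_zero]; rfl
  have hMclosed : IsClosed {p : Y × X | ∃ x : X, p = (π x, (T ^ n) x)} := by
    have he : {p : Y × X | ∃ x : X, p = (π x, (T ^ n) x)} = φ '' Set.univ := by
      ext p
      simp only [Set.mem_setOf_eq, Set.image_univ, Set.mem_range, hφ]
      exact ⟨fun ⟨x, hx⟩ => ⟨x, hx.symm⟩, fun ⟨x, hx⟩ => ⟨x, hx.symm⟩⟩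
    rw [he]
    exact (isCompact_univ.image hφc).isClosed
  apply Set.Subset.antisymm
  · apply closure_minimal _ hMclosed
    rintro q ⟨m, rfl⟩
    refine ⟨(T ^ (m - n)) x₁, ?_⟩
    rw [prodCongr_zpow_apply]
    have h1 : π ((T ^ (m - n)) x₁) = (S ^ m) y₀ := by
      rw [factor_zpow T S π hπ, h, ← homeo_zpow_add_apply, sub_add_cancel]
    have h2 : (T ^ n) ((T ^ (m - n)) x₁) = (T ^ m) x₁ := by
      rw [← homeo_zpow_add_apply, add_sub_cancel]
    rw [h1, h2]
  · rintro p ⟨x, rfl⟩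
    have hx : x ∈ closure {q | ∃ m : ℤ, (T ^ m) x₀ = q} := by
      have := hT x₀
      unfold orbitCl at this
      rw [this]; trivial
    have hmem : φ x ∈ closure (φ '' {q | ∃ m : ℤ, (T ^ m) x₀ = q}) :=
      image_closure_subset_closure_image hφc ⟨x, hx, rfl⟩
    refine closure_mono ?_ hmem
    rintro _ ⟨_, ⟨m, rfl⟩, rfl⟩
    refine ⟨m, ?_⟩
    rw [prodCongr_zpow_apply]
    have h1 : π ((T ^ m) x₀) = (S ^ m) y₀ := by rw [factor_zpow T S π hπ, hy]
    have h2 : (T ^ n) ((T ^ m) x₀) = (T ^ m) x₁ := by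
      rw [← homeo_zpow_add_apply, add_comm, homeo_zpow_add_apply, hx1]
    simp only [hφ, h1, h2]
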